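/- Let V be a nonempty finite set and let u, w, h : V × V → ℝ satisfy: 0 ≤ u_{xy} ≤ 1 and u_{xy} + u_{yx} = 1 for all distinct x, y; u_{xy} + u_{yz} + u_{zx} ≥ 1 for all distinct x, y, z; w_{xx} = 0, w_{xy} ≥ 0, and w_{xy} + w_{yz} ≥ w_{xz} for all distinct x, y, z; h_{xy} ∈ {0,1}, h_{xy} + h_{yx} = 1, and h_{xy} = 1 implies u_{xy} ≥ 1/2, for all distinct x, y. For each v ∈ V let P_v = {(x, y) : x, y ∈ V \ {v}, x ≠ y, h_{vx} = 1 and h_{yv} = 1}, A_v = ∑_{x ≠ v} (h_{xv}·w_{vx} + h_{vx}·w_{xv}) + ∑_{(x,y) ∈ P_v} w_{xy}, and B_v = ∑_{x ≠ v} (u_{xv}·w_{vx} + u_{vx}·w_{xv}) + ∑_{(x,y) ∈ P_v} (u_{xy}·w_{yx} + u_{yx}·w_{xy}). Then there exists a pivot v ∈ V such that A_v ≤ 2·B_v. -/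
import Mathlib

open Finset

/-- Arithmetic core of the cyclic-triangle case. -/
lemma cyc_triangle_ineq (wxy wyv wvx wyx wvy wxv a a' b b' c c' : ℝ)
    (h1 : 0 ≤ wxy) (h2 : 0 ≤ wyv) (h3 : 0 ≤ wvx)
    (h4 : 0 ≤ wyx) (h5 : 0 ≤ wvy) (h6 : 0 ≤ wxv)
    (t1 : wxy ≤ wxv + wvy) (t2 : wyv ≤ wyx + wxv) (t3 : wvx ≤ wvy + wyx)
    (haa : a + a' = 1) (hbb : b + b' = 1) (hcc : c + c' = 1)
    (ha : 1 / 2 ≤ a) (hb : 1 / 2 ≤ b) (hc : 1 / 2 ≤ c)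
    (habc : 1 ≤ a' + b' + c') :
    wxy + wyv + wvx ≤
      2 * (a * wyx + a' * wxy) + 2 * (b * wvy + b' * wyv) +
        2 * (c * wxv + c' * wvx) := by
  have k1 : 0 ≤ (2 * a - 1) * ((wxv + wvy) - wxy) :=
    mul_nonneg (by linarith) (by linarith)
  have k2 : 0 ≤ (2 * b - 1) * ((wyx + wxv) - wyv) :=
    mul_nonneg (by linarith) (by linarith)
  have k3 : 0 ≤ (2 * c - 1) * ((wvy + wyx) - wvx) :=
    mul_nonneg (by linarith) (by linarith)
  have k4 : 0 ≤ (2 * (a' + b' + c') - 2) * (wyx + wvy + wxv) :=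
    mul_nonneg (by linarith) (by linarith)
  have k5 : 0 ≤ (2 * a - 1) * wyx := mul_nonneg (by linarith) h4
  have k6 : 0 ≤ (2 * b - 1) * wvy := mul_nonneg (by linarith) h5
  have k7 : 0 ≤ (2 * c - 1) * wxv := mul_nonneg (by linarith) h6
  nlinarith [k1, k2, k3, k4, k5, k6, k7]

/-- Existence of a good pivot for mmKT-Conv rounding: the summed cost
bound yields by pigeonholing a pivot `v` with `A_v ≤ 2·B_v`. -/
theorem exists_good_pivot {ι : Type*} [DecidableEq ι]
    (V : Finset ι) (hV : V.Nonempty)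
    (u w h : ι → ι → ℝ)
    (hu01 : ∀ x ∈ V, ∀ y ∈ V, x ≠ y → 0 ≤ u x y ∧ u x y ≤ 1)
    (hu_sum : ∀ x ∈ V, ∀ y ∈ V, x ≠ y → u x y + u y x = 1)
    (hu_tri : ∀ x ∈ V, ∀ y ∈ V, ∀ z ∈ V, x ≠ y → y ≠ z → x ≠ z →
      1 ≤ u x y + u y z + u z x)
    (hw_diag : ∀ x ∈ V, w x x = 0)
    (hw0 : ∀ x ∈ V, ∀ y ∈ V, x ≠ y → 0 ≤ w x y)
    (hw_tri : ∀ x ∈ V, ∀ y ∈ V, ∀ z ∈ V, x ≠ y → y ≠ z → x ≠ z →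
      w x z ≤ w x y + w y z)
    (hh01 : ∀ x ∈ V, ∀ y ∈ V, x ≠ y → h x y = 0 ∨ h x y = 1)
    (hh_sum : ∀ x ∈ V, ∀ y ∈ V, x ≠ y → h x y + h y x = 1)
    (hhu : ∀ x ∈ V, ∀ y ∈ V, x ≠ y → h x y = 1 → 1 / 2 ≤ u x y)
    (P : ι → Finset (ι × ι))
    (hP : ∀ v, ∀ p : ι × ι, p ∈ P v ↔
      p.1 ∈ V ∧ p.2 ∈ V ∧ p.1 ≠ v ∧ p.2 ≠ v ∧ p.1 ≠ p.2 ∧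
        h v p.1 = 1 ∧ h p.2 v = 1)
    (A B : ι → ℝ)
    (hA : ∀ v ∈ V, A v =
      (∑ x ∈ V.erase v, (h x v * w v x + h v x * w x v)) +
        ∑ p ∈ P v, w p.1 p.2)
    (hB : ∀ v ∈ V, B v =
      (∑ x ∈ V.erase v, (u x v * w v x + u v x * w x v)) +
        ∑ p ∈ P v, (u p.1 p.2 * w p.2 p.1 + u p.2 p.1 * w p.1 p.2)) :
    ∃ v ∈ V, A v ≤ 2 * B v := by
  by_contra hcon
  push_neg at hcon
  -- h x y ≤ 2 * u x y for distinct x y in V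
  have hle : ∀ x ∈ V, ∀ y ∈ V, x ≠ y → h x y ≤ 2 * u x y := by
    intro x hx y hy hxy
    rcases hh01 x hx y hy hxy with h0 | h1
    · rw [h0]; linarith [(hu01 x hx y hy hxy).1]
    · rw [h1]; linarith [hhu x hx y hy hxy h1]
  -- sums of A and B
  have hAsum : ∑ v ∈ V, A v =
      (∑ v ∈ V, ∑ x ∈ V.erase v, (h x v * w v x + h v x * w x v)) +
        ∑ v ∈ V, ∑ p ∈ P v, w p.1 p.2 := by
    rw [← Finset.sum_add_distrib]; exact Finset.sum_congr rfl hA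
  have hBsum : ∑ v ∈ V, B v =
      (∑ v ∈ V, ∑ x ∈ V.erase v, (u x v * w v x + u v x * w x v)) +
        ∑ v ∈ V, ∑ p ∈ P v, (u p.1 p.2 * w p.2 p.1 + u p.2 p.1 * w p.1 p.2) := by
    rw [← Finset.sum_add_distrib]; exact Finset.sum_congr rfl hB
  -- first parts compare termwise
  have hfirst : (∑ v ∈ V, ∑ x ∈ V.erase v, (h x v * w v x + h v x * w x v)) ≤
      2 * ∑ v ∈ V, ∑ x ∈ V.erase v, (u x v * w v x + u v x * w x v) := by
    rw [Finset.mul_sum]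
    refine Finset.sum_le_sum ?_
    intro v hv
    rw [Finset.mul_sum]
    refine Finset.sum_le_sum ?_
    intro x hx
    obtain ⟨hxv, hxV⟩ := Finset.mem_erase.1 hx
    have w1 : 0 ≤ w v x := hw0 v hv x hxV (Ne.symm hxv)
    have w2 : 0 ≤ w x v := hw0 x hxV v hv hxv
    have l1 : h x v ≤ 2 * u x v := hle x hxV v hv hxv
    have l2 : h v x ≤ 2 * u v x := hle v hv x hxV (Ne.symm hxv)
    nlinarith [mul_le_mul_of_nonneg_right l1 w1, mul_le_mul_of_nonneg_right l2 w2]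
  -- pair parts via sigma sums
  have hpair : (∑ v ∈ V, ∑ p ∈ P v, w p.1 p.2) ≤
      2 * ∑ v ∈ V, ∑ p ∈ P v, (u p.1 p.2 * w p.2 p.1 + u p.2 p.1 * w p.1 p.2) := by
    rw [Finset.sum_sigma' V P (fun v p => w p.1 p.2),
      Finset.sum_sigma' V P (fun v p => (u p.1 p.2 * w p.2 p.1 + u p.2 p.1 * w p.1 p.2))]
    set D := V.sigma P with hD
    -- unfold membership of the sigma set
    have hmem : ∀ t : (_ : ι) × ι × ι, t ∈ D ↔
        (t.1 ∈ V ∧ t.2.1 ∈ V ∧ t.2.2 ∈ V ∧ t.2.1 ≠ t.1 ∧ t.2.2 ≠ t.1 ∧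
          t.2.1 ≠ t.2.2 ∧ h t.1 t.2.1 = 1 ∧ h t.2.2 t.1 = 1) := by
      intro t
      rw [hD, Finset.mem_sigma, hP]
    set φ : (_ : ι) × ι × ι → ℝ := fun t =>
      2 * (u t.2.1 t.2.2 * w t.2.2 t.2.1 + u t.2.2 t.2.1 * w t.2.1 t.2.2) -
        w t.2.1 t.2.2 with hφ
    have main : 0 ≤ ∑ t ∈ D, φ t := by
      classical
      rw [← Finset.sum_filter_add_sum_filter_not D (fun t => h t.2.1 t.2.2 = 1)]
      have htrans : 0 ≤ ∑ t ∈ D.filter (fun t => ¬ h t.2.1 t.2.2 = 1), φ t := by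
        refine Finset.sum_nonneg ?_
        intro t ht
        obtain ⟨htD, htn⟩ := Finset.mem_filter.1 ht
        obtain ⟨h1, h2, h3, h4, h5, h6, h7, h8⟩ := (hmem t).1 htD
        have hh0 : h t.2.1 t.2.2 = 0 := (hh01 _ h2 _ h3 h6).resolve_right htn
        have hyx : h t.2.2 t.2.1 = 1 := by
          have := hh_sum _ h2 _ h3 h6; linarith
        have hu2 : 1 / 2 ≤ u t.2.2 t.2.1 := hhu _ h3 _ h2 (Ne.symm h6) hyx
        have hu1 : 0 ≤ u t.2.1 t.2.2 := (hu01 _ h2 _ h3 h6).1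
        have w1 : 0 ≤ w t.2.1 t.2.2 := hw0 _ h2 _ h3 h6
        have w2 : 0 ≤ w t.2.2 t.2.1 := hw0 _ h3 _ h2 (Ne.symm h6)
        have := mul_le_mul_of_nonneg_right hu2 w1
        have := mul_nonneg hu1 w2
        rw [hφ]
        dsimp only
        nlinarith
      have hcyc : 0 ≤ ∑ t ∈ D.filter (fun t => h t.2.1 t.2.2 = 1), φ t := by
        set Dc := D.filter (fun t => h t.2.1 t.2.2 = 1) with hDc
        set σ : (_ : ι) × ι × ι → (_ : ι) × ι × ι :=
          fun t => ⟨t.2.1, (t.2.2, t.1)⟩ with hσ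
        have hmemc : ∀ t, t ∈ Dc ↔
            (t.1 ∈ V ∧ t.2.1 ∈ V ∧ t.2.2 ∈ V ∧ t.2.1 ≠ t.1 ∧ t.2.2 ≠ t.1 ∧
              t.2.1 ≠ t.2.2 ∧ h t.1 t.2.1 = 1 ∧ h t.2.2 t.1 = 1 ∧
              h t.2.1 t.2.2 = 1) := by
          intro t
          rw [hDc, Finset.mem_filter, hmem t]
          tauto
        have hσmem : ∀ t ∈ Dc, σ t ∈ Dc := by
          intro t ht
          obtain ⟨h1, h2, h3, h4, h5, h6, h7, h8, h9⟩ := (hmemc t).1 ht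
          exact (hmemc (σ t)).2
            ⟨h2, h3, h1, Ne.symm h6, Ne.symm h4, h5, h9, h7, h8⟩
        have hσ3 : ∀ t : (_ : ι) × ι × ι, σ (σ (σ t)) = t := by
          rintro ⟨v, x, y⟩; rfl
        have e1 : ∑ t ∈ Dc, φ (σ t) = ∑ t ∈ Dc, φ t := by
          exact Finset.sum_nbij' σ (fun t => σ (σ t)) hσmem
            (fun t ht => hσmem _ (hσmem _ ht)) (fun t _ => hσ3 t)
            (fun t _ => hσ3 t) (fun t _ => rfl)
        have e2 : ∑ t ∈ Dc, φ (σ (σ t)) = ∑ t ∈ Dc, φ t := by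
          exact Finset.sum_nbij' (fun t => σ (σ t)) σ
            (fun t ht => hσmem _ (hσmem _ ht)) hσmem (fun t _ => hσ3 t)
            (fun t _ => hσ3 t) (fun t _ => rfl)
        have triple : ∀ t ∈ Dc, 0 ≤ φ t + φ (σ t) + φ (σ (σ t)) := by
          intro t ht
          obtain ⟨h1, h2, h3, h4, h5, h6, h7, h8, h9⟩ := (hmemc t).1 ht
          obtain ⟨v, x, y⟩ := t
          simp only at h1 h2 h3 h4 h5 h6 h7 h8 h9
          -- cycle v → x → y → v
          have ua : 1 / 2 ≤ u x y := hhu x h2 y h3 h6 h9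
          have ub : 1 / 2 ≤ u y v := hhu y h3 v h1 h5 h8
          have uc : 1 / 2 ≤ u v x := hhu v h1 x h2 (Ne.symm h4) h7
          have saa : u x y + u y x = 1 := hu_sum x h2 y h3 h6
          have sbb : u y v + u v y = 1 := hu_sum y h3 v h1 h5
          have scc : u v x + u x v = 1 := hu_sum v h1 x h2 (Ne.symm h4)
          have utri : 1 ≤ u y x + u v y + u x v := by
            have := hu_tri x h2 v h1 y h3 h4 (Ne.symm h5) h6
            linarith
          have key := cyc_triangle_ineq (w x y) (w y v) (w v x) (w y x) (w v y) (w x v)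
            (u x y) (u y x) (u y v) (u v y) (u v x) (u x v)
            (hw0 x h2 y h3 h6) (hw0 y h3 v h1 h5) (hw0 v h1 x h2 (Ne.symm h4))
            (hw0 y h3 x h2 (Ne.symm h6)) (hw0 v h1 y h3 (Ne.symm h5))
            (hw0 x h2 v h1 h4)
            (hw_tri x h2 v h1 y h3 h4 (Ne.symm h5) h6)
            (hw_tri y h3 x h2 v h1 (Ne.symm h6) h4 h5)
            (hw_tri v h1 y h3 x h2 (Ne.symm h5) (Ne.symm h6) (Ne.symm h4))
            saa sbb scc ua ub uc utri
          rw [hφ]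
          dsimp only [hσ]
          linarith
        have h3sum : ∑ t ∈ Dc, (φ t + φ (σ t) + φ (σ (σ t))) = 3 * ∑ t ∈ Dc, φ t := by
          rw [Finset.sum_add_distrib, Finset.sum_add_distrib, e1, e2]; ring
        have hnn : 0 ≤ ∑ t ∈ Dc, (φ t + φ (σ t) + φ (σ (σ t))) :=
          Finset.sum_nonneg triple
        linarith [h3sum ▸ hnn]
      linarith
    have expand : ∑ t ∈ D, φ t =
        2 * (∑ t ∈ D, (u t.2.1 t.2.2 * w t.2.2 t.2.1 + u t.2.2 t.2.1 * w t.2.1 t.2.2)) -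
          ∑ t ∈ D, w t.2.1 t.2.2 := by
      rw [Finset.mul_sum, ← Finset.sum_sub_distrib]
    linarith [expand ▸ main]
  -- pigeonhole
  have hlt : ∑ v ∈ V, 2 * B v < ∑ v ∈ V, A v :=
    Finset.sum_lt_sum_of_nonempty hV hcon
  have : ∑ v ∈ V, 2 * B v = 2 * ∑ v ∈ V, B v := by rw [Finset.mul_sum]
  linarith [hAsum, hBsum, hfirst, hpair, hlt, this]
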